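/- Let v ∈ X_0. If T(v;ξ₀) < +∞ for some Reeb field ξ₀, then T(v;ξ) < +∞ for every Reeb field ξ; moreover, for such a linearly bounded v, the map ξ ↦ T(v;ξ) is continuous on the Reeb cone 𝔱⁺ and is homogeneous of degree −1, i.e. T(v;tξ) = t⁻¹T(v;ξ) for all t > 0 and all Reeb fields ξ. -/

import Mathlib

open Filter Topology
open scoped Classical

noncomputable section

/-- A (real) semivaluation on `R` trivial on `k`, encoded as a function `R → ℝ ∪ {+∞} ⊆ EReal`. -/
def IsSemival (k : Type*) {R : Type*} [Field k] [CommRing R] [Algebra k R]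
    (v : R → EReal) : Prop :=
  (∀ f, v f ≠ ⊥) ∧ (∀ f g, v (f * g) = v f + v g) ∧
    (∀ f g, min (v f) (v g) ≤ v (f + g)) ∧ v 0 = ⊤ ∧
    ∀ c : k, c ≠ 0 → v (algebraMap k R c) = 0

/-- The pairing `⟨ξ, α⟩` between `ξ ∈ N_ℝ` and a weight `α ∈ M`. -/
def pairing {r : ℕ} (ξ : Fin r → ℝ) (α : Fin r → ℤ) : ℝ := ∑ i, ξ i * (α i : ℝ)

variable {k : Type*} [Field k] [IsAlgClosed k] [CharZero k]
variable {R : Type*} [CommRing R] [IsDomain R] [IsIntegrallyClosed R] [Algebra k R]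
  [Algebra.FiniteType k R]
variable {r : ℕ} (𝒜 : (Fin r → ℤ) → Submodule k R) [GradedAlgebra 𝒜]

/-- `ξ` is a Reeb field: `⟨ξ,α⟩ > 0` for all `α ∈ Λ ∖ {0}`. -/
def IsReeb (ξ : Fin r → ℝ) : Prop :=
  ∀ α : Fin r → ℤ, α ≠ 0 → 𝒜 α ≠ ⊥ → 0 < pairing ξ α

/-- The maximal ideal `𝔪` of the cone point. -/
def mIdeal : Ideal R := Ideal.span {f : R | ∃ α, α ≠ 0 ∧ f ∈ 𝒜 α}

/-- The semivaluation of the cone point `o`: `+∞` on `𝔪`, `0` elsewhere. -/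
def oFun : R → EReal := fun f => if f ∈ mIdeal 𝒜 then (⊤ : EReal) else 0

/-- The punctured Berkovich cone `X^an ∖ {o}`. -/
def XanP : Set (R → EReal) := {v | IsSemival k v ∧ v ≠ oFun 𝒜}

/-- The term `(log|f| + λ)/⟨ξ,α⟩` evaluated at `v`; recall `log|f|(v) = -v(f)`. -/
def fsTerm (ξ : Fin r → ℝ) (α : Fin r → ℤ) (f : R) (lam : ℝ) (v : R → EReal) : EReal :=
  (((pairing ξ α)⁻¹ : ℝ) : EReal) * (-(v f) + (lam : EReal))

/-- Fubini–Study functions with polarization `ξ`. -/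
def IsFS (ξ : Fin r → ℝ) (φ : XanP 𝒜 → ℝ) : Prop :=
  ∃ (N : ℕ) (f : Fin N → R) (α : Fin N → Fin r → ℤ) (lam : Fin N → ℝ),
    (∀ j, α j ≠ 0 ∧ f j ∈ 𝒜 (α j) ∧ f j ≠ 0) ∧
    (Ideal.span (Set.range f)).radical = mIdeal 𝒜 ∧
    ∀ v : XanP 𝒜, (φ v : EReal) = ⨆ j, fsTerm ξ (α j) (f j) (lam j) v.1

/-- Continuous `ξ`-psh functions: the closure of `H(ξ)` in `C⁰(X^an∖{o})` with the
topology of uniform convergence on compact subsets (compact-open topology). -/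
def cpsh (ξ : Fin r → ℝ) : Set C(↥(XanP 𝒜), ℝ) := closure {φ | IsFS 𝒜 ξ ⇑φ}

/-- `ξ`-psh functions: pointwise limits of decreasing nets of continuous `ξ`-psh
functions, not identically `-∞`, with values in `ℝ ∪ {-∞}`. -/
def IsPsh (ξ : Fin r → ℝ) (φ : XanP 𝒜 → EReal) : Prop :=
  (∀ v, φ v ≠ ⊤) ∧ (∃ v, φ v ≠ ⊥) ∧
  ∃ (ι : Type) (le : ι → ι → Prop),
    Nonempty ι ∧ (∀ i j : ι, ∃ l, le i l ∧ le j l) ∧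
    ∃ φi : ι → C(↥(XanP 𝒜), ℝ),
      (∀ i, φi i ∈ cpsh 𝒜 ξ) ∧
      (∀ i j, le i j → ∀ v, φi j v ≤ φi i v) ∧
      ∀ v, (⨅ i, ((φi i v : ℝ) : EReal)) = φ v

/-- The NA link `X₀ = {v : v(𝔪) = 0}`, as a subset of the punctured cone. -/
def linkSet : Set (↥(XanP 𝒜)) :=
  {v | (∀ f ∈ mIdeal 𝒜, f ≠ 0 → 0 ≤ v.1 f) ∧
    sInf {x : EReal | ∃ f ∈ mIdeal 𝒜, f ≠ 0 ∧ x = v.1 f} = 0}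

/-- `T(v;ξ) = sup { v(f)/⟨ξ,α⟩ : α ∈ Λ∖{0}, f ∈ R_α ∖ {0} }`. -/
def Tfun (v : R → EReal) (ξ : Fin r → ℝ) : EReal :=
  sSup {x : EReal | ∃ (α : Fin r → ℤ) (f : R), α ≠ 0 ∧ f ∈ 𝒜 α ∧ f ≠ 0 ∧
    x = (((pairing ξ α)⁻¹ : ℝ) : EReal) * v f}

end

/-! ### Auxiliary lemmas -/

section AuxLemmas

lemma pairing_zero' {r : ℕ} (ξ : Fin r → ℝ) : pairing ξ 0 = 0 := by
  simp [pairing]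

lemma pairing_add {r : ℕ} (ξ : Fin r → ℝ) (α β : Fin r → ℤ) :
    pairing ξ (α + β) = pairing ξ α + pairing ξ β := by
  simp only [pairing, Pi.add_apply, Int.cast_add, mul_add, Finset.sum_add_distrib]

lemma pairing_smul {r : ℕ} (t : ℝ) (ξ : Fin r → ℝ) (α : Fin r → ℤ) :
    pairing (t • ξ) α = t * pairing ξ α := by
  simp only [pairing, Pi.smul_apply, smul_eq_mul, Finset.mul_sum, mul_assoc]

lemma continuous_pairing {r : ℕ} (α : Fin r → ℤ) :
    Continuous (fun ξ : Fin r → ℝ => pairing ξ α) :=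
  continuous_finset_sum _ fun i _ => (continuous_apply i).mul continuous_const

lemma continuousAt_finset_sup' {ι X : Type*} [TopologicalSpace X] (s : Finset ι)
    (hs : s.Nonempty) (f : ι → X → ℝ) (x : X) (hf : ∀ i ∈ s, ContinuousAt (f i) x) :
    ContinuousAt (fun ξ => s.sup' hs (fun i => f i ξ)) x := by
  induction hs using Finset.Nonempty.cons_induction with
  | singleton a => simpa using hf a (by simp)
  | cons a s ha hs ih =>
      have h2 : (fun ξ => (Finset.cons a s ha).sup' (Finset.cons_nonempty ha) (fun i => f i ξ))
          = fun ξ => max (f a ξ) (s.sup' hs (fun i => f i ξ)) := by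
        funext ξ; rw [Finset.sup'_cons]
      rw [h2]
      exact (hf a (by simp)).max (ih (fun i hi => hf i (Finset.mem_cons_of_mem hi)))

open DirectSum in
lemma exists_degree_finset {k : Type*} [Field k]
    {R : Type*} [CommRing R] [Algebra k R] [Algebra.FiniteType k R]
    {r : ℕ} (𝒜 : (Fin r → ℤ) → Submodule k R) [GradedAlgebra 𝒜] :
    ∃ E : Finset (Fin r → ℤ),
      (∀ d ∈ E, d ≠ 0 ∧ 𝒜 d ≠ ⊥) ∧
      ∀ (α : Fin r → ℤ) (f : R), f ∈ 𝒜 α → f ≠ 0 →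
        α ∈ AddSubmonoid.closure ((E : Set (Fin r → ℤ))) := by
  classical
  obtain ⟨s, hs⟩ := ‹Algebra.FiniteType k R›.out
  set D : Finset (Fin r → ℤ) := s.sup (fun x => (decompose 𝒜 x).support) with hD
  set E : Finset (Fin r → ℤ) := D.filter (fun d => d ≠ 0) with hEdef
  set σ : AddSubmonoid (Fin r → ℤ) := AddSubmonoid.closure (E : Set (Fin r → ℤ)) with hσ
  refine ⟨E, ?_, ?_⟩
  · intro d hd
    rw [hEdef, Finset.mem_filter] at hd
    obtain ⟨hdD, hd0⟩ := hd
    refine ⟨hd0, ?_⟩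
    rw [hD, Finset.mem_sup] at hdD
    obtain ⟨x, _, hx⟩ := hdD
    rw [DFinsupp.mem_support_iff] at hx
    exact Submodule.ne_bot_iff _ |>.mpr ⟨(decompose 𝒜 x d : R), (decompose 𝒜 x d).2,
      fun h => hx (Subtype.ext h)⟩
  · have claim : ∀ x : R, ∀ β : Fin r → ℤ, decompose 𝒜 x β ≠ 0 → β ∈ σ := by
      intro x
      have hx : x ∈ Algebra.adjoin k (s : Set R) := hs ▸ Algebra.mem_top
      induction hx using Algebra.adjoin_induction with
      | mem y hy =>
          intro β hβ
          by_cases hβ0 : β = 0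
          · exact hβ0 ▸ zero_mem σ
          · refine AddSubmonoid.subset_closure ?_
            rw [Finset.mem_coe, hEdef, Finset.mem_filter]
            refine ⟨?_, hβ0⟩
            rw [hD, Finset.mem_sup]
            exact ⟨y, hy, DFinsupp.mem_support_iff.mpr hβ⟩
      | algebraMap c =>
          intro β hβ
          by_cases hβ0 : β = 0
          · exact hβ0 ▸ zero_mem σ
          · exfalso
            have hmem : algebraMap k R c ∈ 𝒜 0 := by
              rw [Algebra.algebraMap_eq_smul_one]
              exact Submodule.smul_mem _ _ (SetLike.one_mem_graded 𝒜)
            exact hβ (ZeroMemClass.coe_eq_zero.mp (decompose_of_mem_ne 𝒜 hmem (Ne.symm hβ0)))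
      | add y z hy hz ihy ihz =>
          intro β hβ
          rw [DirectSum.decompose_add, DirectSum.add_apply] at hβ
          rcases (by by_contra h; push_neg at h; rw [h.1, h.2, add_zero] at hβ; exact hβ rfl :
            decompose 𝒜 y β ≠ 0 ∨ decompose 𝒜 z β ≠ 0) with h | h
          · exact ihy β h
          · exact ihz β h
      | mul y z hy hz ihy ihz =>
          intro β hβ
          have hco : ((decompose 𝒜 (y * z)) β : R) ≠ 0 := fun h => hβ (Subtype.ext h)
          rw [DirectSum.decompose_mul, DirectSum.coe_mul_apply] at hco
          obtain ⟨ij, hij, hne⟩ := Finset.exists_ne_zero_of_sum_ne_zero hco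
          rw [Finset.mem_filter, Finset.mem_product] at hij
          obtain ⟨⟨h1, h2⟩, h3⟩ := hij
          rw [← h3]
          exact add_mem (ihy ij.1 (DFinsupp.mem_support_iff.mp h1))
            (ihz ij.2 (DFinsupp.mem_support_iff.mp h2))
    intro α f hf hf0
    refine claim f α fun h => hf0 ?_
    have h2 := congrArg (Subtype.val) h
    rw [decompose_of_mem_same 𝒜 hf] at h2
    simpa using h2

end AuxLemmas

section Statements

variable {k : Type*} [Field k] [IsAlgClosed k] [CharZero k]
variable {R : Type*} [CommRing R] [IsDomain R] [IsIntegrallyClosed R] [Algebra k R]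
  [Algebra.FiniteType k R]
variable {r : ℕ} (𝒜 : (Fin r → ℤ) → Submodule k R) [GradedAlgebra 𝒜]

/-- The NA link `X₀ = {v ∈ X^an : v(𝔪) = 0}` as a set of semivaluations. -/
def NALink : Set (R → EReal) :=
  {v | IsSemival k v ∧ (∀ f ∈ mIdeal 𝒜, f ≠ 0 → 0 ≤ v f) ∧
    sInf {x : EReal | ∃ f ∈ mIdeal 𝒜, f ≠ 0 ∧ x = v f} = 0}

theorem statement6 (h0 : 𝒜 0 = Submodule.span k {(1 : R)})
    (v : R → EReal) (hv : v ∈ NALink 𝒜)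
    (ξ₀ : Fin r → ℝ) (hξ₀ : IsReeb 𝒜 ξ₀) (hT : Tfun 𝒜 v ξ₀ < ⊤) :
    (∀ ξ : Fin r → ℝ, IsReeb 𝒜 ξ → Tfun 𝒜 v ξ < ⊤) ∧
    ContinuousOn (Tfun 𝒜 v) {ξ : Fin r → ℝ | IsReeb 𝒜 ξ} ∧
    (∀ (t : ℝ), 0 < t → ∀ ξ : Fin r → ℝ, IsReeb 𝒜 ξ →
      Tfun 𝒜 v (t • ξ) = ((t⁻¹ : ℝ) : EReal) * Tfun 𝒜 v ξ) := by
  obtain ⟨hsv, hnn, -⟩ := hv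
  obtain ⟨E, hE, hEmem⟩ := exists_degree_finset 𝒜
  set S : (Fin r → ℝ) → Set EReal := fun ξ =>
    {x : EReal | ∃ (α : Fin r → ℤ) (f : R), α ≠ 0 ∧ f ∈ 𝒜 α ∧ f ≠ 0 ∧
      x = (((pairing ξ α)⁻¹ : ℝ) : EReal) * v f} with hSdef
  have hTS : ∀ ξ, Tfun 𝒜 v ξ = sSup (S ξ) := fun ξ => rfl
  have hpos : ∀ ξ, IsReeb 𝒜 ξ → ∀ (α : Fin r → ℤ) (f : R), α ≠ 0 → f ∈ 𝒜 α → f ≠ 0 →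
      0 < pairing ξ α := fun ξ hξ α f hα hf hf0 =>
    hξ α hα ((Submodule.ne_bot_iff _).mpr ⟨f, hf, hf0⟩)
  have hvnn : ∀ (α : Fin r → ℤ) (f : R), α ≠ 0 → f ∈ 𝒜 α → f ≠ 0 → (0:EReal) ≤ v f :=
    fun α f hα hf hf0 => hnn f (Ideal.subset_span ⟨α, hα, hf⟩) hf0
  have hvtop : ∀ (α : Fin r → ℤ) (f : R), α ≠ 0 → f ∈ 𝒜 α → f ≠ 0 → v f ≠ ⊤ := by
    intro α f hα hf hf0 htop
    have hp := hpos ξ₀ hξ₀ α f hα hf hf0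
    have hmem : (⊤ : EReal) ∈ S ξ₀ :=
      ⟨α, f, hα, hf, hf0, by rw [htop]; exact (EReal.coe_mul_top_of_pos (inv_pos.mpr hp)).symm⟩
    have : (⊤ : EReal) ≤ Tfun 𝒜 v ξ₀ := by rw [hTS]; exact le_sSup hmem
    exact hT.ne (top_le_iff.mp this)
  have hcoe_vf : ∀ (α : Fin r → ℤ) (f : R), α ≠ 0 → f ∈ 𝒜 α → f ≠ 0 →
      v f = (((v f).toReal : ℝ) : EReal) :=
    fun α f hα hf hf0 => (EReal.coe_toReal (hvtop α f hα hf hf0) (hsv.1 f)).symm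
  have hvfR : ∀ (α : Fin r → ℤ) (f : R), α ≠ 0 → f ∈ 𝒜 α → f ≠ 0 → 0 ≤ (v f).toReal := by
    intro α f hα hf hf0
    have h := hvnn α f hα hf hf0
    rw [hcoe_vf α f hα hf hf0] at h
    exact_mod_cast h
  by_cases hex : ∃ (α : Fin r → ℤ) (f : R), α ≠ 0 ∧ f ∈ 𝒜 α ∧ f ≠ 0
  case neg =>
    have hbot : ∀ ξ, Tfun 𝒜 v ξ = ⊥ := by
      intro ξ
      rw [hTS]
      have : S ξ = ∅ := by
        rw [Set.eq_empty_iff_forall_notMem]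
        rintro x ⟨α, f, hα, hf, hf0, -⟩
        exact hex ⟨α, f, hα, hf, hf0⟩
      rw [this, sSup_empty]
    refine ⟨fun ξ _ => by rw [hbot]; exact bot_lt_top,
      ContinuousOn.congr continuousOn_const (fun ξ _ => hbot ξ), fun t ht ξ _ => by
        rw [hbot, hbot]; exact (EReal.coe_mul_bot_of_pos (inv_pos.mpr ht)).symm⟩
  case pos =>
  obtain ⟨α₀, f₀, hα₀, hf₀, hf₀0⟩ := hex
  have hEne : E.Nonempty := by
    rcases Finset.eq_empty_or_nonempty E with h | h
    · exfalso
      have hmem := hEmem α₀ f₀ hf₀ hf₀0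
      rw [h] at hmem
      simp only [Finset.coe_empty, AddSubmonoid.closure_empty, AddSubmonoid.mem_bot] at hmem
      exact hα₀ hmem
    · exact h
  have hT0 : ∀ ξ, IsReeb 𝒜 ξ → (0 : EReal) ≤ Tfun 𝒜 v ξ := by
    intro ξ hξ
    rw [hTS]
    have hp := hpos ξ hξ α₀ f₀ hα₀ hf₀ hf₀0
    refine le_trans ?_ (le_sSup ⟨α₀, f₀, hα₀, hf₀, hf₀0, rfl⟩)
    rw [hcoe_vf α₀ f₀ hα₀ hf₀ hf₀0, ← EReal.coe_mul]
    exact EReal.coe_nonneg.mpr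
      (mul_nonneg (inv_pos.mpr hp).le (hvfR α₀ f₀ hα₀ hf₀ hf₀0))
  have hTnb : ∀ ξ, IsReeb 𝒜 ξ → Tfun 𝒜 v ξ ≠ ⊥ := by
    intro ξ hξ hb
    have := hT0 ξ hξ
    rw [hb, le_bot_iff] at this
    simp at this
  -- the key comparison lemma
  have key : ∀ ξ ξ' : Fin r → ℝ, IsReeb 𝒜 ξ → IsReeb 𝒜 ξ' → Tfun 𝒜 v ξ ≠ ⊤ → ∀ C : ℝ, 0 ≤ C →
      (∀ d ∈ E, pairing ξ d ≤ C * pairing ξ' d) →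
      Tfun 𝒜 v ξ' ≤ (((C * (Tfun 𝒜 v ξ).toReal) : ℝ) : EReal) := by
    intro ξ ξ' hξ hξ' hfin C hC hCd
    have hTcoe : Tfun 𝒜 v ξ = (((Tfun 𝒜 v ξ).toReal : ℝ) : EReal) :=
      (EReal.coe_toReal hfin (hTnb ξ hξ)).symm
    have hσle : ∀ α ∈ AddSubmonoid.closure (E : Set (Fin r → ℤ)),
        pairing ξ α ≤ C * pairing ξ' α := by
      intro α hα
      induction hα using AddSubmonoid.closure_induction with
      | mem d hd => exact hCd d hd
      | zero => simp [pairing_zero']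
      | add a b ha hb iha ihb => rw [pairing_add, pairing_add, mul_add]; exact add_le_add iha ihb
    rw [hTS]
    refine sSup_le ?_
    rintro x ⟨α, f, hα, hf, hf0, rfl⟩
    have hp := hpos ξ hξ α f hα hf hf0
    have hp' := hpos ξ' hξ' α f hα hf hf0
    have hy0 : 0 ≤ (v f).toReal := hvfR α f hα hf hf0
    have hterm : (pairing ξ α)⁻¹ * (v f).toReal ≤ (Tfun 𝒜 v ξ).toReal := by
      have h1 : (((pairing ξ α)⁻¹ : ℝ) : EReal) * v f ≤ Tfun 𝒜 v ξ := by
        rw [hTS]; exact le_sSup ⟨α, f, hα, hf, hf0, rfl⟩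
      rw [hTcoe, hcoe_vf α f hα hf hf0, ← EReal.coe_mul] at h1
      exact_mod_cast h1
    have hreal : (pairing ξ' α)⁻¹ * (v f).toReal ≤ C * (Tfun 𝒜 v ξ).toReal := by
      have h2 : pairing ξ α ≤ C * pairing ξ' α := hσle α (hEmem α f hf hf0)
      have h3 : (pairing ξ' α)⁻¹ * (v f).toReal ≤ C * ((pairing ξ α)⁻¹ * (v f).toReal) := by
        have hR : C * ((pairing ξ α)⁻¹ * (v f).toReal) = (C * (v f).toReal) / pairing ξ α := by
          field_simp
        rw [hR, inv_mul_eq_div, div_le_div_iff₀ hp' hp]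
        nlinarith [mul_le_mul_of_nonneg_left h2 hy0]
      exact h3.trans (mul_le_mul_of_nonneg_left hterm hC)
    rw [hcoe_vf α f hα hf hf0, ← EReal.coe_mul]
    exact EReal.coe_le_coe_iff.mpr hreal
  -- ratio constants
  have hEpos : ∀ ξ, IsReeb 𝒜 ξ → ∀ d ∈ E, 0 < pairing ξ d :=
    fun ξ hξ d hd => hξ d (hE d hd).1 (hE d hd).2
  have hCpos : ∀ ξ ξ' : Fin r → ℝ, IsReeb 𝒜 ξ → IsReeb 𝒜 ξ' →
      0 < E.sup' hEne (fun e => pairing ξ e / pairing ξ' e) := by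
    intro ξ ξ' hξ hξ'
    obtain ⟨d₀, hd₀⟩ := hEne
    exact lt_of_lt_of_le (div_pos (hEpos ξ hξ d₀ hd₀) (hEpos ξ' hξ' d₀ hd₀))
      (Finset.le_sup' (fun e => pairing ξ e / pairing ξ' e) hd₀)
  have hCbound : ∀ ξ ξ' : Fin r → ℝ, IsReeb 𝒜 ξ → IsReeb 𝒜 ξ' → ∀ d ∈ E,
      pairing ξ d ≤ (E.sup' hEne (fun e => pairing ξ e / pairing ξ' e)) * pairing ξ' d := by
    intro ξ ξ' hξ hξ' d hd
    exact (div_le_iff₀ (hEpos ξ' hξ' d hd)).mp (Finset.le_sup' (fun e => pairing ξ e / pairing ξ' e) hd)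
  -- Claim 1 : linear boundedness for every Reeb field
  have claim1 : ∀ ξ : Fin r → ℝ, IsReeb 𝒜 ξ → Tfun 𝒜 v ξ < ⊤ := by
    intro ξ hξ
    exact lt_of_le_of_lt
      (key ξ₀ ξ hξ₀ hξ hT.ne _ (hCpos ξ₀ ξ hξ₀ hξ).le (hCbound ξ₀ ξ hξ₀ hξ))
      (EReal.coe_lt_top _)
  have hTfin : ∀ ξ : Fin r → ℝ, IsReeb 𝒜 ξ →
      Tfun 𝒜 v ξ = (((Tfun 𝒜 v ξ).toReal : ℝ) : EReal) :=
    fun ξ hξ => (EReal.coe_toReal (claim1 ξ hξ).ne (hTnb ξ hξ)).symm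
  have hTRnn : ∀ ξ : Fin r → ℝ, IsReeb 𝒜 ξ → 0 ≤ (Tfun 𝒜 v ξ).toReal := by
    intro ξ hξ
    have h := hT0 ξ hξ
    rw [hTfin ξ hξ] at h
    exact_mod_cast h
  have keyR : ∀ ξ ξ' : Fin r → ℝ, IsReeb 𝒜 ξ → IsReeb 𝒜 ξ' → ∀ C : ℝ, 0 ≤ C →
      (∀ d ∈ E, pairing ξ d ≤ C * pairing ξ' d) →
      (Tfun 𝒜 v ξ').toReal ≤ C * (Tfun 𝒜 v ξ).toReal := by
    intro ξ ξ' hξ hξ' C hC hCd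
    have h := key ξ ξ' hξ hξ' (claim1 ξ hξ).ne C hC hCd
    rw [hTfin ξ' hξ'] at h
    exact_mod_cast h
  refine ⟨claim1, ?_, ?_⟩
  · -- Claim 2 : continuity on the Reeb cone
    have hTrealC : ContinuousOn (fun ξ => (Tfun 𝒜 v ξ).toReal) {ξ : Fin r → ℝ | IsReeb 𝒜 ξ} := by
      intro ζ hζ
      have hζ' : IsReeb 𝒜 ζ := hζ
      have hub : ∀ ξ ∈ {ξ : Fin r → ℝ | IsReeb 𝒜 ξ}, (Tfun 𝒜 v ξ).toReal ≤
          (E.sup' hEne (fun e => pairing ζ e / pairing ξ e)) * (Tfun 𝒜 v ζ).toReal :=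
        fun ξ hξ => keyR ζ ξ hζ' hξ _ (hCpos ζ ξ hζ' hξ).le (hCbound ζ ξ hζ' hξ)
      have hlb : ∀ ξ ∈ {ξ : Fin r → ℝ | IsReeb 𝒜 ξ},
          (E.sup' hEne (fun e => pairing ξ e / pairing ζ e))⁻¹ * (Tfun 𝒜 v ζ).toReal ≤
            (Tfun 𝒜 v ξ).toReal := by
        intro ξ hξ
        have h := keyR ξ ζ hξ hζ' _ (hCpos ξ ζ hξ hζ').le (hCbound ξ ζ hξ hζ')
        have hCp := hCpos ξ ζ hξ hζ'
        calc (E.sup' hEne (fun e => pairing ξ e / pairing ζ e))⁻¹ * (Tfun 𝒜 v ζ).toReal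
            ≤ (E.sup' hEne (fun e => pairing ξ e / pairing ζ e))⁻¹ *
              ((E.sup' hEne (fun e => pairing ξ e / pairing ζ e)) * (Tfun 𝒜 v ξ).toReal) :=
              mul_le_mul_of_nonneg_left h (inv_pos.mpr hCp).le
          _ = (Tfun 𝒜 v ξ).toReal := inv_mul_cancel_left₀ hCp.ne' _
      -- limits of the two bounds
      have hu : Tendsto (fun ξ => (E.sup' hEne (fun e => pairing ζ e / pairing ξ e)) *
          (Tfun 𝒜 v ζ).toReal) (𝓝[{ξ : Fin r → ℝ | IsReeb 𝒜 ξ}] ζ) (𝓝 ((Tfun 𝒜 v ζ).toReal)) := by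
        have hc : ContinuousAt (fun ξ => (E.sup' hEne (fun e => pairing ζ e / pairing ξ e)) *
            (Tfun 𝒜 v ζ).toReal) ζ :=
          (continuousAt_finset_sup' E hEne _ ζ (fun d hd =>
            continuousAt_const.div (continuous_pairing d).continuousAt
              (hEpos ζ hζ' d hd).ne')).mul continuousAt_const
        have hval : (E.sup' hEne (fun e => pairing ζ e / pairing ζ e)) *
            (Tfun 𝒜 v ζ).toReal = (Tfun 𝒜 v ζ).toReal := by
          rw [Finset.sup'_congr hEne rfl (fun d hd => div_self (hEpos ζ hζ' d hd).ne'),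
            Finset.sup'_const, one_mul]
        have h2 := hc.tendsto.mono_left (nhdsWithin_le_nhds :
          𝓝[{ξ : Fin r → ℝ | IsReeb 𝒜 ξ}] ζ ≤ 𝓝 ζ)
        rwa [hval] at h2
      have hl : Tendsto (fun ξ => (E.sup' hEne (fun e => pairing ξ e / pairing ζ e))⁻¹ *
          (Tfun 𝒜 v ζ).toReal) (𝓝[{ξ : Fin r → ℝ | IsReeb 𝒜 ξ}] ζ) (𝓝 ((Tfun 𝒜 v ζ).toReal)) := by
        have hc : ContinuousAt (fun ξ => (E.sup' hEne (fun e => pairing ξ e / pairing ζ e))⁻¹ *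
            (Tfun 𝒜 v ζ).toReal) ζ := by
          refine ContinuousAt.mul (ContinuousAt.inv₀ ?_ ?_) continuousAt_const
          · exact continuousAt_finset_sup' E hEne _ ζ (fun d hd =>
              ((continuous_pairing d).continuousAt).div continuousAt_const
                (hEpos ζ hζ' d hd).ne')
          · exact (hCpos ζ ζ hζ' hζ').ne'
        have hval : (E.sup' hEne (fun e => pairing ζ e / pairing ζ e))⁻¹ *
            (Tfun 𝒜 v ζ).toReal = (Tfun 𝒜 v ζ).toReal := by
          rw [Finset.sup'_congr hEne rfl (fun d hd => div_self (hEpos ζ hζ' d hd).ne'),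
            Finset.sup'_const, inv_one, one_mul]
        have h2 := hc.tendsto.mono_left (nhdsWithin_le_nhds :
          𝓝[{ξ : Fin r → ℝ | IsReeb 𝒜 ξ}] ζ ≤ 𝓝 ζ)
        rwa [hval] at h2
      exact tendsto_of_tendsto_of_tendsto_of_le_of_le' hl hu
        (eventually_nhdsWithin_of_forall hlb) (eventually_nhdsWithin_of_forall hub)
    have hcont : ContinuousOn (fun ξ => (((Tfun 𝒜 v ξ).toReal : ℝ) : EReal))
        {ξ : Fin r → ℝ | IsReeb 𝒜 ξ} :=
      continuous_coe_real_ereal.comp_continuousOn hTrealC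
    exact hcont.congr (fun ξ hξ => hTfin ξ hξ)
  · -- Claim 3 : homogeneity of degree -1
    intro t ht ξ hξ
    have hξt : IsReeb 𝒜 (t • ξ) := by
      intro α hα hb
      rw [pairing_smul]
      exact mul_pos ht (hξ α hα hb)
    have h1 : (Tfun 𝒜 v (t • ξ)).toReal ≤ t⁻¹ * (Tfun 𝒜 v ξ).toReal := by
      refine keyR ξ (t • ξ) hξ hξt t⁻¹ (inv_pos.mpr ht).le ?_
      intro d hd
      rw [pairing_smul, inv_mul_cancel_left₀ ht.ne']
    have h2 : (Tfun 𝒜 v ξ).toReal ≤ t * (Tfun 𝒜 v (t • ξ)).toReal := by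
      refine keyR (t • ξ) ξ hξt hξ t ht.le ?_
      intro d hd
      rw [pairing_smul]
    have h3 : (Tfun 𝒜 v (t • ξ)).toReal = t⁻¹ * (Tfun 𝒜 v ξ).toReal := by
      refine le_antisymm h1 ?_
      calc t⁻¹ * (Tfun 𝒜 v ξ).toReal ≤ t⁻¹ * (t * (Tfun 𝒜 v (t • ξ)).toReal) :=
            mul_le_mul_of_nonneg_left h2 (inv_pos.mpr ht).le
        _ = (Tfun 𝒜 v (t • ξ)).toReal := inv_mul_cancel_left₀ ht.ne' _
    rw [hTfin (t • ξ) hξt, hTfin ξ hξ, ← EReal.coe_mul]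
    exact_mod_cast congrArg (fun x : ℝ => (x : EReal)) h3



end Statements
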